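/- arXiv:2211.08911 — 5 statements merged into one kernel-verified Lean document; each statement's English description precedes it below -/
import Mathlib

section
/- There exists a global minimizer x* of f over the unit box [0,1]^n such that x*_i ∈ {0,1} for every index i with Q_ii ≤ 0. -/
/-- The BoxQP objective function f(x) = (1/2) xᵀQx + cᵀx. -/
noncomputable def boxQPObj {n : ℕ} (Q : Matrix (Fin n) (Fin n) ℝ) (c : Fin n → ℝ)
    (x : Fin n → ℝ) : ℝ :=
  (1 / 2) * ∑ i, ∑ j, Q i j * x i * x j + ∑ i, c i * x i

/-- Membership in the unit box [0,1]^n. -/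
def unitBox {n : ℕ} (x : Fin n → ℝ) : Prop := ∀ i, 0 ≤ x i ∧ x i ≤ 1

/-- The objective, as a function of a single coordinate, is a quadratic with leading
coefficient `Q i i / 2`. -/
lemma boxQP_key {n : ℕ} (Q : Matrix (Fin n) (Fin n) ℝ) (c : Fin n → ℝ) (x : Fin n → ℝ)
    (i : Fin n) :
    ∃ D E : ℝ, ∀ t, boxQPObj Q c (Function.update x i t) =
      Q i i / 2 * t ^ 2 + D * t + E := by
  refine ⟨(1/2) * ((∑ k ∈ {i}ᶜ, Q i k * x k) + ∑ j ∈ {i}ᶜ, Q j i * x j) + c i,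
    (1/2) * ∑ j ∈ {i}ᶜ, ∑ k ∈ {i}ᶜ, Q j k * x j * x k + ∑ j ∈ {i}ᶜ, c j * x j, ?_⟩
  intro t
  set u := Function.update x i t with hu
  have h1 : ∀ (f : Fin n → ℝ), ∑ j, f j = f i + ∑ j ∈ {i}ᶜ, f j :=
    fun f => Fintype.sum_eq_add_sum_compl i f
  have hui : u i = t := Function.update_self i t x
  have huj : ∀ j ∈ ({i}ᶜ : Finset (Fin n)), u j = x j := by
    intro j hj
    exact Function.update_of_ne (by simpa using hj) t x
  have hc : ∑ j ∈ {i}ᶜ, c j * u j = ∑ j ∈ {i}ᶜ, c j * x j :=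
    Finset.sum_congr rfl (fun j hj => by rw [huj j hj])
  have hik : ∑ k ∈ {i}ᶜ, Q i k * u i * u k = (∑ k ∈ {i}ᶜ, Q i k * x k) * t :=
    by rw [Finset.sum_mul]; exact Finset.sum_congr rfl (fun k hk => by rw [huj k hk, hui]; ring)
  have hjj : ∀ j ∈ ({i}ᶜ : Finset (Fin n)),
      (Q j i * u j * u i + ∑ k ∈ {i}ᶜ, Q j k * u j * u k)
        = Q j i * x j * t + ∑ k ∈ {i}ᶜ, Q j k * x j * x k := by
    intro j hj
    rw [huj j hj, hui]
    congr 1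
    exact Finset.sum_congr rfl (fun k hk => by rw [huj k hk])
  unfold boxQPObj
  rw [h1 (fun j => ∑ k, Q j k * u j * u k), h1 (fun j => c j * u j)]
  rw [h1 (fun k => Q i k * u i * u k)]
  rw [Finset.sum_congr rfl (fun j hj => h1 (fun k => Q j k * u j * u k))]
  rw [Finset.sum_congr rfl hjj, hc, hik, hui]
  rw [Finset.sum_add_distrib, ← Finset.sum_mul]
  ring

/-- If `Q i i ≤ 0`, coordinate `i` can be pushed to an endpoint without increasing
the objective. -/
lemma boxQP_fixcoord {n : ℕ} (Q : Matrix (Fin n) (Fin n) ℝ) (c : Fin n → ℝ) (x : Fin n → ℝ)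
    (i : Fin n) (hQi : Q i i ≤ 0) (hx0 : 0 ≤ x i) (hx1 : x i ≤ 1) :
    ∃ t : ℝ, (t = 0 ∨ t = 1) ∧
      boxQPObj Q c (Function.update x i t) ≤ boxQPObj Q c x := by
  obtain ⟨D, E, hg⟩ := boxQP_key Q c x i
  have hx : boxQPObj Q c x = Q i i / 2 * (x i) ^ 2 + D * (x i) + E := by
    rw [← hg (x i), Function.update_eq_self]
  set A := Q i i / 2 with hA
  have hA0 : A ≤ 0 := by simp [hA]; linarith
  rcases le_total (A + D) 0 with hcase | hcase
  · refine ⟨1, Or.inr rfl, ?_⟩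
    rw [hg 1, hx]
    nlinarith [mul_nonneg (sub_nonneg.mpr hx0) (sub_nonneg.mpr hx1),
      mul_nonpos_of_nonpos_of_nonneg hA0 hx0]
  · refine ⟨0, Or.inl rfl, ?_⟩
    rw [hg 0, hx]
    nlinarith [mul_nonneg hx0 (sub_nonneg.mpr hx1)]

/-- Existence of a global minimizer over the (compact) unit box. -/
lemma boxQP_exists_min {n : ℕ} (Q : Matrix (Fin n) (Fin n) ℝ) (c : Fin n → ℝ) :
    ∃ x : Fin n → ℝ, unitBox x ∧
      ∀ y, unitBox y → boxQPObj Q c x ≤ boxQPObj Q c y := by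
  have hbox : {x : Fin n → ℝ | unitBox x} = Set.Icc 0 1 := by
    ext x
    simp [unitBox, Set.mem_Icc, Pi.le_def, forall_and]
  have hcpt : IsCompact {x : Fin n → ℝ | unitBox x} := by
    rw [hbox]; exact isCompact_Icc
  have hne : ({x : Fin n → ℝ | unitBox x}).Nonempty :=
    ⟨0, fun i => by norm_num⟩
  have hcont : ContinuousOn (boxQPObj Q c) {x : Fin n → ℝ | unitBox x} := by
    apply Continuous.continuousOn
    unfold boxQPObj
    fun_prop
  obtain ⟨x, hx, hmin⟩ := hcpt.exists_isMinOn hne hcont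
  exact ⟨x, hx, fun y hy => hmin hy⟩

/-- Inductively fix all coordinates in `s` with nonpositive diagonal. -/
lemma boxQP_main_ind {n : ℕ} (Q : Matrix (Fin n) (Fin n) ℝ) (c : Fin n → ℝ)
    (s : Finset (Fin n)) :
    ∃ x : Fin n → ℝ, unitBox x ∧
      (∀ y, unitBox y → boxQPObj Q c x ≤ boxQPObj Q c y) ∧
      (∀ i ∈ s, Q i i ≤ 0 → x i = 0 ∨ x i = 1) := by
  induction s using Finset.induction_on with
  | empty =>
      obtain ⟨x, hx, hmin⟩ := boxQP_exists_min Q c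
      exact ⟨x, hx, hmin, fun i hi => absurd hi (Finset.notMem_empty i)⟩
  | @insert i s hi IH =>
      obtain ⟨x, hx, hmin, hbin⟩ := IH
      by_cases hQi : Q i i ≤ 0
      · obtain ⟨t, ht, hle⟩ := boxQP_fixcoord Q c x i hQi (hx i).1 (hx i).2
        refine ⟨Function.update x i t, ?_, ?_, ?_⟩
        · intro j
          rcases eq_or_ne j i with rfl | hji
          · rw [Function.update_self]
            rcases ht with rfl | rfl <;> norm_num
          · rw [Function.update_of_ne hji]; exact hx j
        · intro y hy
          exact hle.trans (hmin y hy)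
        · intro j hj hQj
          rcases eq_or_ne j i with rfl | hji
          · rw [Function.update_self]; exact ht
          · rw [Function.update_of_ne hji]
            exact hbin j (Finset.mem_of_mem_insert_of_ne hj hji) hQj
      · refine ⟨x, hx, hmin, fun j hj hQj => ?_⟩
        rcases Finset.mem_insert.mp hj with rfl | hjs
        · exact absurd hQj hQi
        · exact hbin j hjs hQj

/-- There exists a global minimizer x* of f over the unit box [0,1]^n such that
x*_i ∈ {0,1} for every index i with Q_ii ≤ 0. -/
theorem stmt_0 {n : ℕ} (Q : Matrix (Fin n) (Fin n) ℝ) (hQ : Q.IsSymm) (c : Fin n → ℝ) :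
    ∃ xstar : Fin n → ℝ, unitBox xstar ∧
      (∀ y : Fin n → ℝ, unitBox y → boxQPObj Q c xstar ≤ boxQPObj Q c y) ∧
      (∀ i : Fin n, Q i i ≤ 0 → xstar i = 0 ∨ xstar i = 1) := by
  obtain ⟨x, h1, h2, h3⟩ := boxQP_main_ind Q c Finset.univ
  exact ⟨x, h1, h2, fun i => h3 i (Finset.mem_univ i)⟩
end

section
/- If x ∈ [0,1]^n is a local minimizer of f on the unit box [0,1]^n and Q_ii < 0 for some index i, then x_i ∈ {0,1}. -/
lemma sum_ite_const' {n : ℕ} (p : Prop) [Decidable p] (f : Fin n → ℝ) :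
    (∑ b, (if p then f b else 0)) = if p then ∑ b, f b else 0 := by
  split <;> simp

lemma expand_obj {n : ℕ} (Q : Matrix (Fin n) (Fin n) ℝ) (hQ : Q.IsSymm) (c : Fin n → ℝ)
    (x : Fin n → ℝ) (i : Fin n) (t : ℝ) :
    boxQPObj Q c (Function.update x i (x i + t)) =
      boxQPObj Q c x + t * (∑ j, Q i j * x j + c i) + (1/2) * Q i i * t^2 := by
  have hupd : ∀ a, Function.update x i (x i + t) a = x a + (if a = i then t else 0) := by
    intro a
    by_cases h : a = i <;> simp [Function.update_apply, h]
  simp only [boxQPObj, hupd]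
  have h1 : ∀ a b : Fin n, Q a b * (x a + (if a = i then t else 0)) * (x b + (if b = i then t else 0))
      = Q a b * x a * x b + (if a = i then t * (Q a b * x b) else 0)
        + (if b = i then t * (Q a b * x a) else 0) + (if a = i then (if b = i then Q a b * t^2 else 0) else 0) := by
    intro a b
    by_cases ha : a = i <;> by_cases hb : b = i <;> simp [ha, hb] <;> ring
  simp only [h1]
  simp only [Finset.sum_add_distrib, sum_ite_const', Finset.sum_ite_eq', Finset.mem_univ, if_true]
  have hsym : ∀ a : Fin n, Q a i = Q i a := fun a => (hQ.apply a i).symm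
  rw [show (∑ a, t * (Q a i * x a)) = ∑ a, t * (Q i a * x a) from
    Finset.sum_congr rfl fun a _ => by rw [hsym]]
  simp only [mul_add, mul_ite, mul_zero, Finset.sum_add_distrib, Finset.sum_ite_eq',
    Finset.mem_univ, if_true, Finset.mul_sum]
  ring_nf
  have h2 : (∑ a, t * Q i a * x a * (1/2)) * 2 = ∑ a, t * Q i a * x a := by
    rw [Finset.sum_mul]; exact Finset.sum_congr rfl fun a _ => by ring
  rw [h2]; ring

/-- If x ∈ [0,1]^n is a local minimizer of f on the unit box [0,1]^n and Q_ii < 0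
for some index i, then x_i ∈ {0,1}. -/
theorem stmt_1 {n : ℕ} (Q : Matrix (Fin n) (Fin n) ℝ) (hQ : Q.IsSymm) (c : Fin n → ℝ)
    (x : Fin n → ℝ) (hx : unitBox x)
    (hloc : ∃ ε > (0 : ℝ), ∀ y : Fin n → ℝ, unitBox y → dist y x < ε →
      boxQPObj Q c x ≤ boxQPObj Q c y)
    (i : Fin n) (hi : Q i i < 0) :
    x i = 0 ∨ x i = 1 := by
  by_contra h
  push_neg at h
  obtain ⟨h0, h1⟩ := h
  have hx0 : 0 < x i := lt_of_le_of_ne (hx i).1 (Ne.symm h0)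
  have hx1 : x i < 1 := lt_of_le_of_ne (hx i).2 h1
  obtain ⟨ε, hε, hmin⟩ := hloc
  set g : ℝ := ∑ j, Q i j * x j + c i with hg
  set s : ℝ := min (min (x i) (1 - x i)) (ε / 2) with hs
  have hspos : 0 < s := lt_min (lt_min hx0 (by linarith)) (by linarith)
  have hs1 : s ≤ x i := le_trans (min_le_left _ _) (min_le_left _ _)
  have hs2 : s ≤ 1 - x i := le_trans (min_le_left _ _) (min_le_right _ _)
  have hs3 : s ≤ ε / 2 := min_le_right _ _
  set t : ℝ := if 0 ≤ g then -s else s with ht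
  have htabs : |t| = s := by
    rw [ht]; split
    · rw [abs_neg, abs_of_pos hspos]
    · rw [abs_of_pos hspos]
  have htg : t * g ≤ 0 := by
    rw [ht]; split
    · rename_i hgpos
      have : 0 ≤ s * g := mul_nonneg hspos.le hgpos
      nlinarith
    · rename_i hgneg
      push_neg at hgneg
      nlinarith
  have htne : t ≠ 0 := by
    rw [ht]; split <;> [exact neg_ne_zero.mpr hspos.ne'; exact hspos.ne']
  set y : Fin n → ℝ := Function.update x i (x i + t) with hy
  have hybox : unitBox y := by
    intro j
    by_cases hj : j = i
    · subst hj
      simp only [hy, Function.update_self]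
      have : -s ≤ t ∧ t ≤ s := by
        rw [ht]; split <;> constructor <;> linarith
      constructor <;> linarith [this.1, this.2]
    · simp only [hy, Function.update_of_ne hj]
      exact hx j
  have hdist : dist y x < ε := by
    rw [dist_pi_lt_iff hε]
    intro j
    by_cases hj : j = i
    · subst hj
      simp only [hy, Function.update_self, Real.dist_eq]
      rw [show x j + t - x j = t by ring, htabs]
      linarith
    · simp only [hy, Function.update_of_ne hj, Real.dist_eq, sub_self, abs_zero]
      exact hε
  have hle := hmin y hybox hdist
  rw [hy, expand_obj Q hQ c x i t] at hle
  rw [← hg] at hle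
  have htsq : 0 < t ^ 2 := by positivity
  have h3 : Q i i * t ^ 2 < 0 := mul_neg_of_neg_of_pos hi htsq
  clear_value t s g
  linarith
end

section
/- Let λ ∈ ℝ^n satisfy λ_i ≥ Q_ii for all i, let Λ = Diag(λ), and define g(x) = (1/2) xᵀ(Q − Λ)x + (c + (1/2)λ)ᵀx. Then the minimum of g over the unit box [0,1]^n equals the minimum of f(x) = (1/2) xᵀQx + cᵀx over {0,1}^n, and this common minimum is attained by a point x* ∈ {0,1}^n that is simultaneously a global minimizer of g over [0,1]^n and of f over {0,1}^n. -/
open Finset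

lemma quad_expand {n : ℕ} (A : Matrix (Fin n) (Fin n) ℝ) (i : Fin n) (v : Fin n → ℝ) :
    ∑ k, ∑ l, A k l * v k * v l =
      (∑ k ∈ univ.erase i, ∑ l ∈ univ.erase i, A k l * v k * v l)
      + (∑ l ∈ univ.erase i, A i l * v l) * v i
      + (∑ k ∈ univ.erase i, A k i * v k) * v i
      + A i i * v i * v i := by
  have h1 : ∀ k, ∑ l, A k l * v k * v l =
      (∑ l ∈ univ.erase i, A k l * v k * v l) + A k i * v k * v i :=
    fun k => (Finset.sum_erase_add _ _ (Finset.mem_univ i)).symm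
  simp_rw [h1]
  rw [← Finset.sum_erase_add _ _ (Finset.mem_univ i), Finset.sum_add_distrib]
  rw [show (∑ k ∈ univ.erase i, A k i * v k * v i) =
      (∑ k ∈ univ.erase i, A k i * v k) * v i from by rw [Finset.sum_mul]]
  rw [show (∑ l ∈ univ.erase i, A i l * v i * v l) =
      (∑ l ∈ univ.erase i, A i l * v l) * v i from by
    rw [Finset.sum_mul]; exact Finset.sum_congr rfl fun l _ => by ring]
  ring

lemma obj_update {n : ℕ} (A : Matrix (Fin n) (Fin n) ℝ) (c y : Fin n → ℝ) (i : Fin n)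
    (t : ℝ) :
    boxQPObj A c (Function.update y i t) =
      (1/2) * A i i * (t^2 - t)
      + (1 - t) * boxQPObj A c (Function.update y i 0)
      + t * boxQPObj A c (Function.update y i 1) := by
  have hq : ∀ s : ℝ, ∑ k, ∑ l, A k l * Function.update y i s k * Function.update y i s l =
      (∑ k ∈ univ.erase i, ∑ l ∈ univ.erase i, A k l * y k * y l)
      + (∑ l ∈ univ.erase i, A i l * y l) * s
      + (∑ k ∈ univ.erase i, A k i * y k) * s
      + A i i * s * s := by
    intro s
    rw [quad_expand A i]
    have e1 : ∑ k ∈ univ.erase i, ∑ l ∈ univ.erase i,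
        A k l * Function.update y i s k * Function.update y i s l =
        ∑ k ∈ univ.erase i, ∑ l ∈ univ.erase i, A k l * y k * y l :=
      Finset.sum_congr rfl fun k hk => Finset.sum_congr rfl fun l hl => by
        rw [Function.update_of_ne (Finset.ne_of_mem_erase hk),
            Function.update_of_ne (Finset.ne_of_mem_erase hl)]
    have e2 : ∑ l ∈ univ.erase i, A i l * Function.update y i s l =
        ∑ l ∈ univ.erase i, A i l * y l :=
      Finset.sum_congr rfl fun l hl => by
        rw [Function.update_of_ne (Finset.ne_of_mem_erase hl)]
    have e3 : ∑ k ∈ univ.erase i, A k i * Function.update y i s k =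
        ∑ k ∈ univ.erase i, A k i * y k :=
      Finset.sum_congr rfl fun k hk => by
        rw [Function.update_of_ne (Finset.ne_of_mem_erase hk)]
    rw [e1, e2, e3, Function.update_self]
  have hl : ∀ s : ℝ, ∑ k, c k * Function.update y i s k =
      (∑ k ∈ univ.erase i, c k * y k) + c i * s := by
    intro s
    rw [← Finset.sum_erase_add _ _ (Finset.mem_univ i), Function.update_self]
    congr 1
    exact Finset.sum_congr rfl fun k hk => by
      rw [Function.update_of_ne (Finset.ne_of_mem_erase hk)]
  unfold boxQPObj
  rw [hq t, hq 0, hq 1, hl t, hl 0, hl 1]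
  ring

lemma round_coord {n : ℕ} (A : Matrix (Fin n) (Fin n) ℝ) (c y : Fin n → ℝ) (i : Fin n)
    (hA : A i i ≤ 0) (h0 : 0 ≤ y i) (h1 : y i ≤ 1) :
    ∃ t : ℝ, (t = 0 ∨ t = 1) ∧
      boxQPObj A c (Function.update y i t) ≤ boxQPObj A c y := by
  have hy : boxQPObj A c y = boxQPObj A c (Function.update y i (y i)) := by
    rw [Function.update_eq_self]
  have hkey : boxQPObj A c (Function.update y i (y i)) =
      (1/2) * A i i * ((y i)^2 - y i)
      + (1 - y i) * boxQPObj A c (Function.update y i 0)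
      + (y i) * boxQPObj A c (Function.update y i 1) := obj_update A c y i (y i)
  rcases le_total (boxQPObj A c (Function.update y i 0))
      (boxQPObj A c (Function.update y i 1)) with h | h
  · exact ⟨0, Or.inl rfl, by
      rw [hy, hkey]
      nlinarith [mul_nonneg h0 (sub_nonneg.2 h),
        mul_nonneg (neg_nonneg.2 hA) (mul_nonneg h0 (sub_nonneg.2 h1))]⟩
  · exact ⟨1, Or.inr rfl, by
      rw [hy, hkey]
      nlinarith [mul_nonneg (sub_nonneg.2 h1) (sub_nonneg.2 h),
        mul_nonneg (neg_nonneg.2 hA) (mul_nonneg h0 (sub_nonneg.2 h1))]⟩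

lemma round_all {n : ℕ} (A : Matrix (Fin n) (Fin n) ℝ) (c : Fin n → ℝ)
    (hA : ∀ i, A i i ≤ 0) :
    ∀ m : ℕ, ∀ (s : Finset (Fin n)) (y : Fin n → ℝ), s.card ≤ m → unitBox y →
      (∀ i, i ∉ s → y i = 0 ∨ y i = 1) →
      ∃ z : Fin n → ℝ, (∀ i, z i = 0 ∨ z i = 1) ∧ boxQPObj A c z ≤ boxQPObj A c y := by
  intro m
  induction m with
  | zero =>
    intro s y hcard hy hbin
    refine ⟨y, fun i => hbin i ?_, le_refl _⟩
    have : s = ∅ := Finset.card_eq_zero.mp (Nat.le_zero.mp hcard)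
    simp [this]
  | succ m ih =>
    intro s y hcard hy hbin
    rcases s.eq_empty_or_nonempty with rfl | ⟨i, hi⟩
    · exact ⟨y, fun i => hbin i (by simp), le_refl _⟩
    · obtain ⟨t, ht, hle⟩ := round_coord A c y i (hA i) (hy i).1 (hy i).2
      have hbox : unitBox (Function.update y i t) := by
        intro j
        by_cases hj : j = i
        · subst hj; rw [Function.update_self]
          rcases ht with rfl | rfl <;> norm_num
        · rw [Function.update_of_ne hj]; exact hy j
      have hbin' : ∀ j, j ∉ s.erase i → Function.update y i t j = 0 ∨
          Function.update y i t j = 1 := by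
        intro j hj
        by_cases hji : j = i
        · subst hji; rw [Function.update_self]; exact ht
        · rw [Function.update_of_ne hji]
          exact hbin j fun hjs => hj (Finset.mem_erase.2 ⟨hji, hjs⟩)
      have hcard' : (s.erase i).card ≤ m := by
        have := Finset.card_erase_of_mem hi
        omega
      obtain ⟨z, hz, hzle⟩ := ih (s.erase i) (Function.update y i t) hcard' hbox hbin'
      exact ⟨z, hz, hzle.trans hle⟩

lemma g_eq_f {n : ℕ} (Q : Matrix (Fin n) (Fin n) ℝ) (c lam : Fin n → ℝ) (x : Fin n → ℝ)
    (hx : ∀ i, x i = 0 ∨ x i = 1) :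
    boxQPObj (Q - Matrix.diagonal lam) (fun i => c i + (1 / 2) * lam i) x =
      boxQPObj Q c x := by
  unfold boxQPObj
  have h1 : ∀ i, ∑ j, (Q - Matrix.diagonal lam) i j * x i * x j =
      (∑ j, Q i j * x i * x j) - lam i * x i := by
    intro i
    have hd : ∑ j, Matrix.diagonal lam i j * x i * x j = lam i * x i := by
      rw [Finset.sum_eq_single i]
      · rcases hx i with h | h <;> simp [h, Matrix.diagonal_apply_eq] <;> ring
      · intro j _ hj
        rw [Matrix.diagonal_apply_ne' lam hj]; ring
      · simp
    calc ∑ j, (Q - Matrix.diagonal lam) i j * x i * x j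
        = ∑ j, (Q i j * x i * x j - Matrix.diagonal lam i j * x i * x j) := by
          apply Finset.sum_congr rfl; intro j _; simp [Matrix.sub_apply]; ring
      _ = (∑ j, Q i j * x i * x j) - lam i * x i := by
          rw [Finset.sum_sub_distrib, hd]
  simp_rw [h1]
  rw [Finset.sum_sub_distrib]
  have h2 : ∑ i, (c i + (1/2) * lam i) * x i =
      (∑ i, c i * x i) + (1/2) * ∑ i, lam i * x i := by
    rw [Finset.mul_sum, ← Finset.sum_add_distrib]
    apply Finset.sum_congr rfl; intro j _; ring
  rw [h2]
  ring

/-- Let λ_i ≥ Q_ii for all i, Λ = Diag(λ), and g(x) = (1/2) xᵀ(Q − Λ)x + (c + (1/2)λ)ᵀx.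
Then the minimum of g over the unit box [0,1]^n equals the minimum of
f(x) = (1/2) xᵀQx + cᵀx over {0,1}^n, the common minimum being attained at a binary point
x* that is simultaneously a global minimizer of g over [0,1]^n and of f over {0,1}^n. -/
theorem stmt_6 {n : ℕ} (Q : Matrix (Fin n) (Fin n) ℝ) (hQ : Q.IsSymm) (c lam : Fin n → ℝ)
    (hlam : ∀ i, Q i i ≤ lam i) :
    ∃ xstar : Fin n → ℝ, (∀ i, xstar i = 0 ∨ xstar i = 1) ∧
      (∀ y : Fin n → ℝ, unitBox y →
        boxQPObj (Q - Matrix.diagonal lam) (fun i => c i + (1 / 2) * lam i) xstar ≤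
        boxQPObj (Q - Matrix.diagonal lam) (fun i => c i + (1 / 2) * lam i) y) ∧
      (∀ y : Fin n → ℝ, (∀ i, y i = 0 ∨ y i = 1) →
        boxQPObj Q c xstar ≤ boxQPObj Q c y) ∧
      boxQPObj (Q - Matrix.diagonal lam) (fun i => c i + (1 / 2) * lam i) xstar =
        boxQPObj Q c xstar := by
  classical
  set A := Q - Matrix.diagonal lam with hAdef
  set c' : Fin n → ℝ := fun i => c i + (1 / 2) * lam i with hc'
  have hA : ∀ i, A i i ≤ 0 := by
    intro i
    simp [hAdef, Matrix.sub_apply, Matrix.diagonal_apply_eq]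
    linarith [hlam i]
  -- finite set of binary vectors
  set S : Finset (Fin n → ℝ) :=
    Finset.image (fun b : Fin n → Bool => fun i => if b i then (1:ℝ) else 0) Finset.univ
    with hS
  have hSne : S.Nonempty := ⟨_, Finset.mem_image.2 ⟨fun _ => false, Finset.mem_univ _, rfl⟩⟩
  obtain ⟨xstar, hxS, hmin⟩ := S.exists_min_image (boxQPObj Q c) hSne
  have hxbin : ∀ i, xstar i = 0 ∨ xstar i = 1 := by
    obtain ⟨b, _, rfl⟩ := Finset.mem_image.1 hxS
    intro i; by_cases hb : b i <;> simp [hb]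
  have hmem : ∀ y : Fin n → ℝ, (∀ i, y i = 0 ∨ y i = 1) → y ∈ S := by
    intro y hy
    refine Finset.mem_image.2 ⟨fun i => decide (y i = 1), Finset.mem_univ _, ?_⟩
    funext i
    rcases hy i with h | h <;> simp [h]
  have hfmin : ∀ y : Fin n → ℝ, (∀ i, y i = 0 ∨ y i = 1) →
      boxQPObj Q c xstar ≤ boxQPObj Q c y := fun y hy => hmin y (hmem y hy)
  refine ⟨xstar, hxbin, ?_, hfmin, g_eq_f Q c lam xstar hxbin⟩
  intro y hy
  obtain ⟨z, hzbin, hzle⟩ := round_all A c' hA n Finset.univ y (by simp) hy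
    (fun i hi => absurd (Finset.mem_univ i) hi)
  calc boxQPObj A c' xstar = boxQPObj Q c xstar := g_eq_f Q c lam xstar hxbin
    _ ≤ boxQPObj Q c z := hfmin z hzbin
    _ = boxQPObj A c' z := (g_eq_f Q c lam z hzbin).symm
    _ ≤ boxQPObj A c' y := hzle
end

section
/- Safe lower bound from LP post-processing: let Q be a real symmetric n×n matrix, c ∈ ℝ^n, and set Q̃ = (1/2)[[0, cᵀ],[c, Q]]. Let B^1, …, B^m be symmetric (n+1)×(n+1) matrices and b ∈ ℝ^m such that for every x ∈ [0,1]^n the matrix X̃(x) = [[1, xᵀ],[x, x xᵀ]] satisfies B^i • X̃(x) ≥ b_i for all i. Let Z̃ be a symmetric positive semidefinite (n+1)×(n+1) matrix and suppose (y, v, S) with y ∈ ℝ, v ∈ ℝ^m, v ≥ 0, and S symmetric entrywise nonnegative satisfies y E_11 + Σ_{i=1}^m v_i B^i + S = Q̃ − Z̃. Then y + bᵀv ≤ (1/2) xᵀQx + cᵀx for every x ∈ [0,1]^n; in particular y + bᵀv is a valid lower bound on the optimal value of the BoxQP problem. -/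
/-- The trace inner product A • B = Σ_{i,j} A_ij B_ij of two symmetric real matrices. -/
noncomputable def traceIP {m : Type*} [Fintype m] (A B : Matrix m m ℝ) : ℝ :=
  ∑ i, ∑ j, A i j * B i j

/-- The rank-one lifting X̃(x) = [[1, xᵀ],[x, x xᵀ]] of a vector x. -/
def liftMat {n : ℕ} (x : Fin n → ℝ) : Matrix (Unit ⊕ Fin n) (Unit ⊕ Fin n) ℝ :=
  Matrix.fromBlocks (fun _ _ => 1) (fun _ j => x j) (fun i _ => x i) (Matrix.vecMulVec x x)

/-- The matrix Q̃ = (1/2)[[0, cᵀ],[c, Q]]. -/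
noncomputable def Qtilde {n : ℕ} (Q : Matrix (Fin n) (Fin n) ℝ) (c : Fin n → ℝ) :
    Matrix (Unit ⊕ Fin n) (Unit ⊕ Fin n) ℝ :=
  (1 / 2 : ℝ) • Matrix.fromBlocks 0 (fun _ j => c j) (fun i _ => c i) Q

/-- The matrix E_11 which is all zeros except the (1,1)-entry, which equals 1. -/
def E11' (n : ℕ) : Matrix (Unit ⊕ Fin n) (Unit ⊕ Fin n) ℝ :=
  fun i j => if i = Sum.inl () ∧ j = Sum.inl () then 1 else 0

lemma traceIP_add {k : Type*} [Fintype k] (A B X : Matrix k k ℝ) :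
    traceIP (A + B) X = traceIP A X + traceIP B X := by
  simp [traceIP, add_mul, Finset.sum_add_distrib]

lemma traceIP_sub {k : Type*} [Fintype k] (A B X : Matrix k k ℝ) :
    traceIP (A - B) X = traceIP A X - traceIP B X := by
  simp [traceIP, sub_mul, Finset.sum_sub_distrib]

lemma traceIP_smul {k : Type*} [Fintype k] (r : ℝ) (A X : Matrix k k ℝ) :
    traceIP (r • A) X = r * traceIP A X := by
  simp [traceIP, Finset.mul_sum, mul_assoc]

lemma traceIP_sum {k : Type*} [Fintype k] {ι : Type*} (s : Finset ι)
    (A : ι → Matrix k k ℝ) (X : Matrix k k ℝ) :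
    traceIP (∑ i ∈ s, A i) X = ∑ i ∈ s, traceIP (A i) X := by
  classical
  induction s using Finset.induction_on with
  | empty => simp [traceIP]
  | insert _ _ h ih => simp [Finset.sum_insert h, traceIP_add, ih]

lemma traceIP_E11 {n : ℕ} (x : Fin n → ℝ) : traceIP (E11' n) (liftMat x) = 1 := by
  simp [traceIP, E11', liftMat, Fintype.sum_sum_type, Matrix.fromBlocks]

lemma traceIP_Qtilde {n : ℕ} (Q : Matrix (Fin n) (Fin n) ℝ) (c : Fin n → ℝ) (x : Fin n → ℝ) :
    traceIP (Qtilde Q c) (liftMat x) = boxQPObj Q c x := by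
  simp only [traceIP, Qtilde, liftMat, boxQPObj, Fintype.sum_sum_type, Matrix.smul_apply,
    Matrix.fromBlocks_apply₁₁, Matrix.fromBlocks_apply₁₂, Matrix.fromBlocks_apply₂₁,
    Matrix.fromBlocks_apply₂₂, Matrix.vecMulVec_apply, Matrix.zero_apply, smul_eq_mul,
    Matrix.fromBlocks, Matrix.of_apply, Sum.elim_inl, Sum.elim_inr]
  simp only [Finset.univ_unique, Finset.sum_const, Finset.card_singleton, one_smul,
    mul_zero, zero_mul, mul_one]
  rw [Finset.sum_add_distrib]
  have hQQ : ∑ i : Fin n, ∑ j : Fin n, 1/2 * Q i j * (x i * x j)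
      = ∑ i : Fin n, 1/2 * ∑ j : Fin n, Q i j * x i * x j := by
    refine Finset.sum_congr rfl fun i _ => ?_
    rw [Finset.mul_sum]
    exact Finset.sum_congr rfl fun j _ => by ring
  have hc : ∑ i : Fin n, 1/2 * c i * x i + ∑ i : Fin n, 1/2 * c i * x i
      = ∑ i : Fin n, c i * x i := by
    rw [← Finset.sum_add_distrib]
    exact Finset.sum_congr rfl fun i _ => by ring
  have hh : 1/2 * ∑ i : Fin n, ∑ j : Fin n, Q i j * x i * x j
      = ∑ i : Fin n, 1/2 * ∑ j : Fin n, Q i j * x i * x j := by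
    rw [Finset.mul_sum]
  linarith

lemma traceIP_psd {n : ℕ} (Z : Matrix (Unit ⊕ Fin n) (Unit ⊕ Fin n) ℝ)
    (hZ : Z.PosSemidef) (x : Fin n → ℝ) : 0 ≤ traceIP Z (liftMat x) := by
  have h := hZ.dotProduct_mulVec_nonneg (Sum.elim (fun _ => (1:ℝ)) x)
  simp only [dotProduct, Matrix.mulVec, dotProduct, Pi.star_apply,
    RCLike.star_def, conj_trivial] at h
  refine le_trans h (le_of_eq ?_)
  simp only [traceIP]
  refine Finset.sum_congr rfl fun i _ => ?_
  rw [Finset.mul_sum]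
  refine Finset.sum_congr rfl fun j _ => ?_
  have : liftMat x i j = Sum.elim (fun _ => (1:ℝ)) x i * Sum.elim (fun _ => (1:ℝ)) x j := by
    rcases i with i | i <;> rcases j with j | j <;> simp [liftMat, Matrix.vecMulVec_apply, Matrix.fromBlocks]
  rw [this]; ring

lemma liftMat_nn {n : ℕ} (x : Fin n → ℝ) (hx : unitBox x) :
    ∀ i j, 0 ≤ liftMat x i j := by
  intro i j
  rcases i with i | i <;> rcases j with j | j <;>
    simp [liftMat, Matrix.vecMulVec_apply, Matrix.fromBlocks] <;>
    first
      | exact (hx j).1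
      | exact (hx i).1
      | exact mul_nonneg (hx i).1 (hx j).1

/-- Safe lower bound from LP post-processing: if the constraints B^i • X̃ ≥ b_i are valid
for all rank-one liftings X̃(x) of points x of the unit box, Z̃ ⪰ 0, v ≥ 0, S entrywise
nonnegative and y E_11 + Σ v_i B^i + S = Q̃ − Z̃, then y + bᵀv ≤ (1/2) xᵀQx + cᵀx for
every x ∈ [0,1]^n, i.e. y + bᵀv is a valid lower bound on the optimal value of BoxQP. -/
theorem stmt_13 {n m : ℕ} (Q : Matrix (Fin n) (Fin n) ℝ) (hQ : Q.IsSymm) (c : Fin n → ℝ)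
    (B : Fin m → Matrix (Unit ⊕ Fin n) (Unit ⊕ Fin n) ℝ) (hB : ∀ i, (B i).IsSymm)
    (b : Fin m → ℝ)
    (hvalid : ∀ x : Fin n → ℝ, unitBox x → ∀ i, b i ≤ traceIP (B i) (liftMat x))
    (Zt : Matrix (Unit ⊕ Fin n) (Unit ⊕ Fin n) ℝ) (hZt : Zt.PosSemidef)
    (y : ℝ) (v : Fin m → ℝ) (hv : ∀ i, 0 ≤ v i)
    (S : Matrix (Unit ⊕ Fin n) (Unit ⊕ Fin n) ℝ) (hSsymm : S.IsSymm)
    (hSnn : ∀ i j, 0 ≤ S i j)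
    (hdual : y • E11' n + ∑ i, v i • B i + S = Qtilde Q c - Zt) :
    ∀ x : Fin n → ℝ, unitBox x → y + ∑ i, b i * v i ≤ boxQPObj Q c x := by
  intro x hx
  have key := congrArg (fun A => traceIP A (liftMat x)) hdual
  simp only [traceIP_add, traceIP_sub, traceIP_smul, traceIP_sum, traceIP_E11,
    traceIP_Qtilde, mul_one] at key
  have hS : 0 ≤ traceIP S (liftMat x) := by
    refine Finset.sum_nonneg fun i _ => Finset.sum_nonneg fun j _ =>
      mul_nonneg (hSnn i j) (liftMat_nn x hx i j)
  have hZ : 0 ≤ traceIP Zt (liftMat x) := traceIP_psd Zt hZt x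
  have hBv : ∑ i, b i * v i ≤ ∑ i, v i * traceIP (B i) (liftMat x) := by
    refine Finset.sum_le_sum fun i _ => ?_
    rw [mul_comm (v i)]
    exact mul_le_mul_of_nonneg_right (hvalid x hx i) (hv i)
  linarith
end

section
/- Correctness of the per-coordinate MILP linearization of the KKT conditions: let Q be a real n×n matrix, c ∈ ℝ^n, x ∈ [0,1]^n, i an index, and set (Qx)_i = Σ_j Q_ij x_j, ℓ_i = Σ_{j : Q_ij < 0} Q_ij, u_i = Σ_{j : Q_ij > 0} Q_ij. Then there exist δ, ρ, ξ ∈ {0,1} with δ + ρ + ξ = 1 satisfying x_i ≤ 1 − δ, (Qx)_i ≥ ℓ_i(1 − δ) − δ c_i, x_i ≥ ρ, (Qx)_i ≤ u_i(1 − ρ) − ρ c_i, (Qx)_i ≤ u_i(1 − ξ) − ξ c_i, and (Qx)_i ≥ ℓ_i(1 − ξ) − ξ c_i, if and only if (x_i = 0 and (Qx)_i ≥ −c_i) or (x_i = 1 and (Qx)_i ≤ −c_i) or ((Qx)_i = −c_i). -/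
/-- Correctness of the per-coordinate MILP linearization of the KKT conditions of BoxQP:
with (Qx)_i = Σ_j Q_ij x_j, ℓ_i = Σ_{j : Q_ij < 0} Q_ij, u_i = Σ_{j : Q_ij > 0} Q_ij,
there exist binary δ, ρ, ξ with δ + ρ + ξ = 1 satisfying the six linearized constraints
iff (x_i = 0 and (Qx)_i ≥ −c_i) or (x_i = 1 and (Qx)_i ≤ −c_i) or ((Qx)_i = −c_i). -/
theorem stmt_19 {n : ℕ} (Q : Matrix (Fin n) (Fin n) ℝ) (c : Fin n → ℝ)
    (x : Fin n → ℝ) (hx : unitBox x) (i : Fin n) :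
    (∃ δ ρ ξ : ℝ, (δ = 0 ∨ δ = 1) ∧ (ρ = 0 ∨ ρ = 1) ∧ (ξ = 0 ∨ ξ = 1) ∧
      δ + ρ + ξ = 1 ∧
      x i ≤ 1 - δ ∧
      (∑ j ∈ Finset.univ.filter (fun j => Q i j < 0), Q i j) * (1 - δ) - δ * c i ≤
        ∑ j, Q i j * x j ∧
      ρ ≤ x i ∧
      (∑ j, Q i j * x j) ≤
        (∑ j ∈ Finset.univ.filter (fun j => 0 < Q i j), Q i j) * (1 - ρ) - ρ * c i ∧
      (∑ j, Q i j * x j) ≤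
        (∑ j ∈ Finset.univ.filter (fun j => 0 < Q i j), Q i j) * (1 - ξ) - ξ * c i ∧
      (∑ j ∈ Finset.univ.filter (fun j => Q i j < 0), Q i j) * (1 - ξ) - ξ * c i ≤
        ∑ j, Q i j * x j) ↔
    ((x i = 0 ∧ -c i ≤ ∑ j, Q i j * x j) ∨
     (x i = 1 ∧ (∑ j, Q i j * x j) ≤ -c i) ∨
     (∑ j, Q i j * x j) = -c i) := by
  set S := ∑ j, Q i j * x j with hS
  set L := ∑ j ∈ Finset.univ.filter (fun j => Q i j < 0), Q i j with hLdef
  set U := ∑ j ∈ Finset.univ.filter (fun j => 0 < Q i j), Q i j with hUdef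
  have hL : L ≤ S := by
    have h1 : L ≤ ∑ j ∈ Finset.univ.filter (fun j => Q i j < 0), Q i j * x j := by
      apply Finset.sum_le_sum
      intro j hj
      simp only [Finset.mem_filter] at hj
      nlinarith [(hx j).1, (hx j).2, hj.2]
    have h2 : (∑ j ∈ Finset.univ.filter (fun j => Q i j < 0), Q i j * x j) ≤ S := by
      apply Finset.sum_le_sum_of_subset_of_nonneg (Finset.filter_subset _ _)
      intro j _ hj
      simp only [Finset.mem_filter, Finset.mem_univ, true_and, not_lt] at hj
      exact mul_nonneg hj (hx j).1
    linarith
  have hU : S ≤ U := by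
    have hsplit := Finset.sum_filter_add_sum_filter_not Finset.univ
      (fun j => 0 < Q i j) (fun j => Q i j * x j)
    have h1 : (∑ j ∈ Finset.univ.filter (fun j => 0 < Q i j), Q i j * x j) ≤ U := by
      apply Finset.sum_le_sum
      intro j hj
      simp only [Finset.mem_filter] at hj
      nlinarith [(hx j).1, (hx j).2, hj.2]
    have h2 : (∑ j ∈ Finset.univ.filter (fun j => ¬ 0 < Q i j), Q i j * x j) ≤ 0 := by
      apply Finset.sum_nonpos
      intro j hj
      simp only [Finset.mem_filter, Finset.mem_univ, true_and, not_lt] at hj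
      exact mul_nonpos_of_nonpos_of_nonneg hj (hx j).1
    calc S = (∑ j ∈ Finset.univ.filter (fun j => 0 < Q i j), Q i j * x j)
            + ∑ j ∈ Finset.univ.filter (fun j => ¬ 0 < Q i j), Q i j * x j := hsplit.symm
      _ ≤ U := by linarith
  obtain ⟨hx0, hx1⟩ := hx i
  constructor
  · rintro ⟨δ, ρ, ξ, hδ, hρ, hξ, hsum, c1, c2, c3, c4, c5, c6⟩
    rcases hδ with hδ | hδ <;> rcases hρ with hρ | hρ <;> rcases hξ with hξ | hξ <;>
      subst hδ <;> subst hρ <;> subst hξ <;> try linarith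
    · -- ξ = 1
      right; right; linarith
    · -- ρ = 1
      right; left; constructor
      · linarith
      · linarith
    · -- δ = 1
      left; constructor
      · linarith
      · linarith
  · rintro (⟨h0, hc⟩ | ⟨h1, hc⟩ | hc)
    · exact ⟨1, 0, 0, Or.inr rfl, Or.inl rfl, Or.inl rfl, by ring, by linarith,
        by simp; linarith, by linarith, by simpa using hU, by simpa using hU,
        by simpa using hL⟩
    · exact ⟨0, 1, 0, Or.inl rfl, Or.inr rfl, Or.inl rfl, by ring, by linarith,
        by simpa using hL, by linarith, by simp; linarith, by simpa using hU,
        by simpa using hL⟩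
    · exact ⟨0, 0, 1, Or.inl rfl, Or.inl rfl, Or.inr rfl, by ring, by linarith,
        by simpa using hL, by linarith, by simpa using hU, by simp; linarith,
        by simp; linarith⟩
end
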